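/- Over ℚ (or any field of characteristic ≠ 2), the polynomial ŵ₁⁴ − 8ŵ₀³ŵ₂ − 8ŵ₀ŵ₂³, after substituting ŵ₀ = (y₁² − y₃² + y₅² − y₇²)/2, ŵ₁ = (y₀ − y₄)(y₂ − y₆), and ŵ₂ = y₃y₇ − y₁y₅, lies in the ideal of ℚ[y₀,...,y₇] generated by the 2×2 minors of the 4×4 Moore matrix M₄(y,y) = (y_{i+j} y_{i−j} + y_{i+j+4} y_{i−j+4})_{0≤i,j≤3} (indices mod 8). -/
import Mathlib

open MvPolynomial

set_option maxHeartbeats 4000000 in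
set_option maxRecDepth 10000 in
/-- In ℚ[y₀,…,y₇], the polynomial ŵ₁⁴ − 8ŵ₀³ŵ₂ − 8ŵ₀ŵ₂³, with
ŵ₀ = (y₁² − y₃² + y₅² − y₇²)/2, ŵ₁ = (y₀ − y₄)(y₂ − y₆), ŵ₂ = y₃y₇ − y₁y₅,
lies in the ideal generated by the 2×2 minors of the Moore matrix
M₄(y,y) = (y_{i+j} y_{i−j} + y_{i+j+4} y_{i−j+4}) (indices mod 8). -/
theorem quartic_in_minors_ideal :
    ∀ M : Matrix (Fin 4) (Fin 4) (MvPolynomial (Fin 8) ℚ),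
      (M = fun i j =>
        X (Fin.castLE (by norm_num) i + Fin.castLE (by norm_num) j) *
            X (Fin.castLE (by norm_num) i - Fin.castLE (by norm_num) j) +
          X (Fin.castLE (by norm_num) i + Fin.castLE (by norm_num) j + 4) *
            X (Fin.castLE (by norm_num) i - Fin.castLE (by norm_num) j + 4)) →
    ∀ w₀ w₁ w₂ : MvPolynomial (Fin 8) ℚ,
      w₀ = C (1/2 : ℚ) * (X 1 ^ 2 - X 3 ^ 2 + X 5 ^ 2 - X 7 ^ 2) →
      w₁ = (X 0 - X 4) * (X 2 - X 6) →
      w₂ = X 3 * X 7 - X 1 * X 5 →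
      w₁ ^ 4 - 8 * w₀ ^ 3 * w₂ - 8 * w₀ * w₂ ^ 3 ∈
        Ideal.span {m : MvPolynomial (Fin 8) ℚ |
          ∃ i₀ i₁ j₀ j₁ : Fin 4, m = M i₀ j₀ * M i₁ j₁ - M i₀ j₁ * M i₁ j₀} := by
  intro M hM w₀ w₁ w₂ hw0 hw1 hw2
  have hC2 : (C (1/2 : ℚ) : MvPolynomial (Fin 8) ℚ) * 2 = 1 := by
    rw [show (2 : MvPolynomial (Fin 8) ℚ) = C 2 from (map_ofNat C 2).symm, ← C_mul]
    norm_num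
  have hw0' : 2 * w₀ = X 1 ^ 2 - X 3 ^ 2 + X 5 ^ 2 - X 7 ^ 2 := by
    linear_combination 2 * hw0 + (X 1 ^ 2 - X 3 ^ 2 + X 5 ^ 2 - X 7 ^ 2) * hC2
  have hM00 : M 0 0 = X 0 * X 0 + X 4 * X 4 := by subst hM; rfl
  have hM01 : M 0 1 = X 1 * X 7 + X 5 * X 3 := by subst hM; rfl
  have hM02 : M 0 2 = X 2 * X 6 + X 6 * X 2 := by subst hM; rfl
  have hM10 : M 1 0 = X 1 * X 1 + X 5 * X 5 := by subst hM; rfl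
  have hM11 : M 1 1 = X 2 * X 0 + X 6 * X 4 := by subst hM; rfl
  have hM12 : M 1 2 = X 3 * X 7 + X 7 * X 3 := by subst hM; rfl
  have hM20 : M 2 0 = X 2 * X 2 + X 6 * X 6 := by subst hM; rfl
  have hM21 : M 2 1 = X 3 * X 1 + X 7 * X 5 := by subst hM; rfl
  have hM22 : M 2 2 = X 4 * X 0 + X 0 * X 4 := by subst hM; rfl
  have hM30 : M 3 0 = X 3 * X 3 + X 7 * X 7 := by subst hM; rfl
  have hM31 : M 3 1 = X 4 * X 2 + X 0 * X 6 := by subst hM; rfl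
  have hM32 : M 3 2 = X 5 * X 1 + X 1 * X 5 := by subst hM; rfl
  have key : 2 * w₁ ^ 4 - 2 * (2 * w₀) ^ 3 * w₂ - 8 * (2 * w₀) * w₂ ^ 3 =
        ((2) * (X 5 ^ 3 * X 7) + (10) * (X 4 * X 6 ^ 3) + (-40) * (X 2 * X 4 * X 6 ^ 2) + (28) * (X 2 ^ 2 * X 4 * X 6) + (-8) * (X 2 ^ 3 * X 4) + (22) * (X 1 * X 3 * X 5 ^ 2) + (6) * (X 1 ^ 2 * X 5 * X 7) + (2) * (X 1 ^ 3 * X 3) + (-8) * (X 0 * X 6 ^ 3) + (12) * (X 0 * X 2 * X 6 ^ 2) + (-8) * (X 0 * X 2 ^ 2 * X 6) + (2) * (X 0 * X 2 ^ 3)) * (M 0 0 * M 1 1 - M 0 1 * M 1 0) +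
        ((16) * (X 3 * X 4 * X 5 * X 6) + (-13) * (X 2 * X 3 * X 4 * X 5) + (16) * (X 1 * X 4 * X 6 * X 7) + (-9) * (X 1 * X 2 * X 4 * X 7) + (-9) * (X 0 * X 3 * X 5 * X 6) + (-5) * (X 0 * X 1 * X 6 * X 7)) * (M 0 0 * M 1 2 - M 0 2 * M 1 0) +
        ((-16) * (X 4 ^ 3 * X 6) + (3) * (X 3 * X 5 * X 7 ^ 2) + (11) * (X 3 ^ 3 * X 5) + (4) * (X 2 * X 4 ^ 3) + (3) * (X 1 * X 7 ^ 3) + (-5) * (X 1 * X 3 ^ 2 * X 7) + (-4) * (X 0 * X 4 ^ 2 * X 6) + (16) * (X 0 * X 2 * X 4 ^ 2)) * (M 0 1 * M 1 2 - M 0 2 * M 1 1) +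
        ((-10) * (X 4 * X 5 ^ 2 * X 6) + (-2) * (X 2 * X 4 * X 7 ^ 2) + (8) * (X 2 * X 4 * X 5 ^ 2) + (-2) * (X 2 * X 3 ^ 2 * X 4) + (-10) * (X 1 ^ 2 * X 4 * X 6) + (8) * (X 1 ^ 2 * X 2 * X 4) + (-2) * (X 0 * X 6 * X 7 ^ 2) + (8) * (X 0 * X 5 ^ 2 * X 6) + (-2) * (X 0 * X 3 ^ 2 * X 6) + (-2) * (X 0 * X 2 * X 5 ^ 2) + (8) * (X 0 * X 1 ^ 2 * X 6) + (-2) * (X 0 * X 1 ^ 2 * X 2)) * (M 0 0 * M 2 1 - M 0 1 * M 2 0) +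
        ((8) * (X 3 * X 4 * X 6 * X 7) + (-16) * (X 2 * X 3 * X 4 * X 7) + (4) * (X 1 * X 2 * X 4 * X 5) + (-16) * (X 0 * X 3 * X 6 * X 7) + (8) * (X 0 * X 2 * X 3 * X 7) + (4) * (X 0 * X 1 * X 5 * X 6)) * (M 0 1 * M 2 2 - M 0 2 * M 2 1) +
        ((2) * (X 5 * X 7 ^ 3) + (-8) * (X 5 ^ 3 * X 7) + (20) * (X 3 ^ 2 * X 5 * X 7) + (8) * (X 2 * X 4 * X 6 ^ 2) + (2) * (X 2 ^ 3 * X 4) + (12) * (X 1 * X 3 * X 7 ^ 2) + (-8) * (X 1 * X 3 * X 5 ^ 2) + (2) * (X 1 * X 3 ^ 3) + (-40) * (X 1 ^ 2 * X 5 * X 7) + (-8) * (X 1 ^ 3 * X 3) + (2) * (X 0 * X 6 ^ 3)) * (M 0 0 * M 3 1 - M 0 1 * M 3 0) +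
        ((-14) * (X 3 * X 4 * X 5 * X 6) + (-6) * (X 1 * X 4 * X 6 * X 7) + (16) * (X 1 * X 2 * X 4 * X 7) + (-10) * (X 0 * X 2 * X 3 * X 5) + (16) * (X 0 * X 1 * X 6 * X 7) + (-2) * (X 0 * X 1 * X 2 * X 7)) * (M 0 0 * M 3 2 - M 0 2 * M 3 0) +
        ((4) * (X 4 ^ 3 * X 6) + (16) * (X 3 * X 5 * X 7 ^ 2) + (4) * (X 3 * X 5 ^ 3) + (-16) * (X 1 * X 7 ^ 3) + (-4) * (X 1 * X 5 ^ 2 * X 7) + (-4) * (X 0 * X 2 * X 4 ^ 2)) * (M 0 1 * M 3 2 - M 0 2 * M 3 1) +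
        ((8) * (X 4 ^ 3 * X 6) + (-8) * (X 0 * X 2 * X 4 ^ 2)) * (M 1 0 * M 2 1 - M 1 1 * M 2 0) +
        ((4) * (X 5 * X 7 ^ 3) + (4) * (X 1 * X 3 ^ 3)) * (M 1 1 * M 2 2 - M 1 2 * M 2 1) +
        ((8) * (X 0 * X 4 * X 5 * X 7) + (8) * (X 0 * X 1 * X 3 * X 4)) * (M 1 0 * M 3 1 - M 1 1 * M 3 0) +
        ((-1) * (X 7 ^ 4) + (-2) * (X 5 ^ 2 * X 7 ^ 2) + (1) * (X 5 ^ 4) + (-6) * (X 3 ^ 2 * X 7 ^ 2) + (4) * (X 3 ^ 2 * X 5 ^ 2) + (-1) * (X 3 ^ 4) + (6) * (X 1 ^ 2 * X 5 ^ 2) + (-2) * (X 1 ^ 2 * X 3 ^ 2) + (1) * (X 1 ^ 4)) * (M 1 0 * M 3 2 - M 1 2 * M 3 0) := by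
    rw [hw0', hw1, hw2, hM00, hM01, hM02, hM10, hM11, hM12, hM20, hM21, hM22, hM30, hM31, hM32]
    ring
  have h2T : 2 * w₁ ^ 4 - 2 * (2 * w₀) ^ 3 * w₂ - 8 * (2 * w₀) * w₂ ^ 3 ∈
      Ideal.span {m : MvPolynomial (Fin 8) ℚ |
        ∃ i₀ i₁ j₀ j₁ : Fin 4, m = M i₀ j₀ * M i₁ j₁ - M i₀ j₁ * M i₁ j₀} := by
    rw [key]
    exact (Ideal.add_mem _ (Ideal.add_mem _ (Ideal.add_mem _ (Ideal.add_mem _ (Ideal.add_mem _ (Ideal.add_mem _ (Ideal.add_mem _ (Ideal.add_mem _ (Ideal.add_mem _ (Ideal.add_mem _ (Ideal.add_mem _ (Ideal.mul_mem_left _ _ (Ideal.subset_span ⟨0, 1, 0, 1, rfl⟩)) (Ideal.mul_mem_left _ _ (Ideal.subset_span ⟨0, 1, 0, 2, rfl⟩))) (Ideal.mul_mem_left _ _ (Ideal.subset_span ⟨0, 1, 1, 2, rfl⟩))) (Ideal.mul_mem_left _ _ (Ideal.subset_span ⟨0, 2, 0, 1, rfl⟩))) (Ideal.mul_mem_left _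 _ (Ideal.subset_span ⟨0, 2, 1, 2, rfl⟩))) (Ideal.mul_mem_left _ _ (Ideal.subset_span ⟨0, 3, 0, 1, rfl⟩))) (Ideal.mul_mem_left _ _ (Ideal.subset_span ⟨0, 3, 0, 2, rfl⟩))) (Ideal.mul_mem_left _ _ (Ideal.subset_span ⟨0, 3, 1, 2, rfl⟩))) (Ideal.mul_mem_left _ _ (Ideal.subset_span ⟨1, 2, 0, 1, rfl⟩))) (Ideal.mul_mem_left _ _ (Ideal.subset_span ⟨1, 2, 1, 2, rfl⟩))) (Ideal.mul_mem_left _ _ (Ideal.subset_span ⟨1, 3, 0, 1, rfl⟩))) (Ideal.mul_mem_left _ _ (Ideal.subset_span ⟨1, 3, 0, 2, rfl⟩)))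
  have hfin : w₁ ^ 4 - 8 * w₀ ^ 3 * w₂ - 8 * w₀ * w₂ ^ 3 =
      C (1/2 : ℚ) * (2 * w₁ ^ 4 - 2 * (2 * w₀) ^ 3 * w₂ - 8 * (2 * w₀) * w₂ ^ 3) := by
    linear_combination (-w₁ ^ 4 + 8 * w₀ ^ 3 * w₂ + 8 * w₀ * w₂ ^ 3) * hC2
  rw [hfin]
  exact Ideal.mul_mem_left _ _ h2T
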